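/- Square-summability and vanishing increments for group interaction (n individuals): In the finite group-interaction model on a graph E over [n], with Z_g(0) = Σ_{i,j ∈ [n]} ( (‖x_i(0) − x_j(0)‖² ∧ ε²) ∨ ε²·1{(i,j) ∉ E} ), one has Σ_{t=0}^{∞} Σ_{i ∈ [n]} ‖x_i(t) − x_i(t+1)‖² ≤ Z_g(0)/4; in particular x_i(t) − x_i(t+1) → 0 as t → ∞ for every i ∈ [n]. -/

import Mathlib

open scoped Classical
set_option maxHeartbeats 1000000

/-- The update neighborhood under group interaction on a simple graph `G` over `[n]`:
`N_i(t) = {j : j = i, or (i,j) ∈ E and ‖x_i(t) − x_j(t)‖ ≤ ε}`. -/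
noncomputable def grpNbhd {n d : ℕ} (G : SimpleGraph (Fin n)) (ε : ℝ)
    (x : ℕ → Fin n → EuclideanSpace ℝ (Fin d)) (t : ℕ) (i : Fin n) : Finset (Fin n) :=
  Finset.univ.filter fun j => j = i ∨ (G.Adj i j ∧ ‖x t i - x t j‖ ≤ ε)

open Finset
open scoped RealInnerProductSpace

private lemma group_step {n d : ℕ} (ε : ℝ) (hε : 0 < ε) (G : SimpleGraph (Fin n))
    (x : ℕ → Fin n → EuclideanSpace ℝ (Fin d)) (α : ℕ → Fin n → ℝ)
    (hα : ∀ t i, α t i ∈ Set.Icc (0 : ℝ) 1)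
    (hdyn : ∀ t i, x (t + 1) i =
      α t i • x t i + ((1 - α t i) / ((grpNbhd G ε x t i).card : ℝ)) •
        ∑ k ∈ grpNbhd G ε x t i, x t k) (t : ℕ) :
    4 * (∑ i, ‖x t i - x (t + 1) i‖ ^ 2) +
      (∑ i, ∑ j, (min (‖x (t+1) i - x (t+1) j‖ ^ 2) (ε ^ 2)) ⊔ (if G.Adj i j then 0 else ε ^ 2)) ≤
      ∑ i, ∑ j, (min (‖x t i - x t j‖ ^ 2) (ε ^ 2)) ⊔ (if G.Adj i j then 0 else ε ^ 2) := by
  set y := x (t + 1) with hy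
  set S : Fin n → Finset (Fin n) :=
    fun i => univ.filter (fun j => G.Adj i j ∧ ‖x t i - x t j‖ ≤ ε) with hS
  have hSmem : ∀ i j, j ∈ S i ↔ (G.Adj i j ∧ ‖x t i - x t j‖ ≤ ε) := by
    intro i j; simp [hS]
  have hSsymm : ∀ i j, j ∈ S i ↔ i ∈ S j := by
    intro i j
    rw [hSmem, hSmem, G.adj_comm, norm_sub_rev]
  have hiS : ∀ i, i ∉ S i := by
    intro i h; exact G.irrefl ((hSmem i i).1 h).1
  have hN : ∀ i, grpNbhd G ε x t i = insert i (S i) := by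
    intro i; ext j
    simp only [grpNbhd, hS, Finset.mem_insert, Finset.mem_filter, Finset.mem_univ, true_and]
  set Δ : Fin n → EuclideanSpace ℝ (Fin d) := fun i => y i - x t i with hΔdef
  set w : Fin n → EuclideanSpace ℝ (Fin d) := fun i => ∑ j ∈ S i, (x t j - x t i) with hwdef
  set c : Fin n → ℝ := fun i => ((S i).card : ℝ) with hcdef
  set β : Fin n → ℝ := fun i => (1 - α t i) / (c i + 1) with hβdef
  have hc0 : ∀ i, 0 ≤ c i := fun i => Nat.cast_nonneg _
  have hβ0 : ∀ i, 0 ≤ β i := fun i =>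
    div_nonneg (by linarith [(hα t i).2]) (by linarith [hc0 i])
  have hβc : ∀ i, β i * (c i + 1) = 1 - α t i := by
    intro i
    have h1 : c i + 1 ≠ 0 := by positivity
    show (1 - α t i) / (c i + 1) * (c i + 1) = 1 - α t i
    exact div_mul_cancel₀ _ h1
  -- the increment formula
  have hΔ : ∀ i, Δ i = β i • w i := by
    intro i
    have hcard : ((grpNbhd G ε x t i).card : ℝ) = c i + 1 := by
      rw [hN i, Finset.card_insert_of_notMem (hiS i)]
      show ((((S i).card : ℕ) + 1 : ℕ) : ℝ) = c i + 1
      push_cast; rfl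
    have hsum : ∑ k ∈ grpNbhd G ε x t i, x t k = x t i + ∑ j ∈ S i, x t j := by
      rw [hN i, Finset.sum_insert (hiS i)]
    have hw : w i = (∑ j ∈ S i, x t j) - c i • x t i := by
      show ∑ j ∈ S i, (x t j - x t i) = (∑ j ∈ S i, x t j) - c i • x t i
      rw [sum_sub_distrib, Finset.sum_const]
      congr 1
      exact (Nat.cast_smul_eq_nsmul ℝ _ _).symm
    have hcoef : α t i + β i - 1 = -(β i * c i) := by
      have h := hβc i; nlinarith [hβc i]
    show y i - x t i = β i • w i
    rw [hy, hdyn t i, hcard, hsum, hw]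
    have hβi : (1 - α t i) / (c i + 1) = β i := rfl
    rw [hβi, smul_sub, smul_smul, smul_add]
    calc α t i • x t i + (β i • x t i + β i • ∑ j ∈ S i, x t j) - x t i
        = (α t i + β i - 1) • x t i + β i • ∑ j ∈ S i, x t j := by
          rw [sub_smul, add_smul, one_smul]; abel
      _ = (-(β i * c i)) • x t i + β i • ∑ j ∈ S i, x t j := by rw [hcoef]
      _ = β i • ∑ j ∈ S i, x t j - (β i * c i) • x t i := by rw [neg_smul]; abel
  -- key per-agent inner-product inequality
  have hkey : ∀ i, (inner ℝ (∑ j ∈ S i, (x t i - x t j)) (Δ i) : ℝ) ≤ -((c i + 1) * ‖Δ i‖ ^ 2) := by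
    intro i
    have hsum : (∑ j ∈ S i, (x t i - x t j)) = -w i := by
      rw [hwdef]
      show ∑ j ∈ S i, (x t i - x t j) = -∑ j ∈ S i, (x t j - x t i)
      rw [← sum_neg_distrib]
      exact Finset.sum_congr rfl fun j _ => by abel
    rw [hsum, hΔ i, inner_neg_left, real_inner_smul_right, real_inner_self_eq_norm_sq,
      norm_smul, Real.norm_eq_abs, abs_of_nonneg (hβ0 i)]
    have h1 : β i * (c i + 1) ≤ 1 := by rw [hβc i]; linarith [(hα t i).1]
    nlinarith [sq_nonneg ‖w i‖, hβ0 i, hc0 i, mul_nonneg (hβ0 i) (sq_nonneg ‖w i‖)]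
  -- symmetry swap for double sums over S
  have hswap : ∀ g : Fin n → Fin n → ℝ,
      ∑ i, ∑ j ∈ S i, g i j = ∑ i, ∑ j ∈ S i, g j i := by
    intro g
    have h1 : ∀ (h : Fin n → Fin n → ℝ) (i : Fin n),
        ∑ j ∈ S i, h i j = ∑ j, if j ∈ S i then h i j else 0 := by
      intro h i
      rw [sum_ite_mem, Finset.univ_inter]
    rw [Finset.sum_congr rfl fun i _ => h1 g i,
      Finset.sum_congr rfl fun i _ => h1 (fun i j => g j i) i, Finset.sum_comm]
    exact Finset.sum_congr rfl fun a _ => Finset.sum_congr rfl fun b _ =>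
      if_congr (hSsymm b a) rfl rfl
  -- Step A: energy difference dominates the sum over confident neighbors
  have stepA : (∑ i, ∑ j ∈ S i, (‖x t i - x t j‖ ^ 2 - ‖y i - y j‖ ^ 2)) ≤
      (∑ i, ∑ j, (min (‖x t i - x t j‖ ^ 2) (ε ^ 2)) ⊔ (if G.Adj i j then 0 else ε ^ 2))
      - (∑ i, ∑ j, (min (‖y i - y j‖ ^ 2) (ε ^ 2)) ⊔ (if G.Adj i j then 0 else ε ^ 2)) := by
    rw [← sum_sub_distrib]
    refine Finset.sum_le_sum fun i _ => ?_
    rw [← sum_sub_distrib]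
    have h2 : ∑ j ∈ S i, (‖x t i - x t j‖ ^ 2 - ‖y i - y j‖ ^ 2)
        = ∑ j, if j ∈ S i then (‖x t i - x t j‖ ^ 2 - ‖y i - y j‖ ^ 2) else 0 := by
      rw [sum_ite_mem, Finset.univ_inter]
    rw [h2]
    refine Finset.sum_le_sum fun j _ => ?_
    by_cases hadj : G.Adj i j
    · have hmin0t : (0:ℝ) ≤ min (‖x t i - x t j‖ ^ 2) (ε ^ 2) :=
        le_min (by positivity) (by positivity)
      have hmin0y : (0:ℝ) ≤ min (‖y i - y j‖ ^ 2) (ε ^ 2) :=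
        le_min (by positivity) (by positivity)
      rw [if_pos hadj, sup_eq_left.2 hmin0t, sup_eq_left.2 hmin0y]
      by_cases hle : ‖x t i - x t j‖ ≤ ε
      · have hjS : j ∈ S i := (hSmem i j).2 ⟨hadj, hle⟩
        rw [if_pos hjS, min_eq_left (by nlinarith [norm_nonneg (x t i - x t j)])]
        have := min_le_left (‖y i - y j‖ ^ 2) (ε ^ 2)
        linarith
      · have hjS : j ∉ S i := fun h => hle ((hSmem i j).1 h).2
        rw [if_neg hjS, min_eq_right (by nlinarith [le_of_not_ge hle, hε.le])]
        have := min_le_right (‖y i - y j‖ ^ 2) (ε ^ 2)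
        linarith
    · have hjS : j ∉ S i := fun h => hadj ((hSmem i j).1 h).1
      rw [if_neg hadj, if_neg hjS,
        sup_eq_right.2 (min_le_right (‖x t i - x t j‖ ^ 2) (ε ^ 2)),
        sup_eq_right.2 (min_le_right (‖y i - y j‖ ^ 2) (ε ^ 2))]
      linarith
  -- expansion of each pair difference
  have hexp : ∀ i j, ‖x t i - x t j‖ ^ 2 - ‖y i - y j‖ ^ 2
      = -2 * (inner ℝ (x t i - x t j) (Δ i - Δ j) : ℝ) - ‖Δ i - Δ j‖ ^ 2 := by
    intro i j
    have hy' : y i - y j = (x t i - x t j) + (Δ i - Δ j) := by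
      show y i - y j = (x t i - x t j) + ((y i - x t i) - (y j - x t j))
      abel
    rw [hy', norm_add_sq_real]; ring
  -- the cross term
  have hA : ∑ i, ∑ j ∈ S i, (inner ℝ (x t i - x t j) (Δ i - Δ j) : ℝ)
      = 2 * ∑ i, (inner ℝ (∑ j ∈ S i, (x t i - x t j)) (Δ i) : ℝ) := by
    have h1 : ∀ i, ∑ j ∈ S i, (inner ℝ (x t i - x t j) (Δ i - Δ j) : ℝ)
        = ∑ j ∈ S i, (inner ℝ (x t i - x t j) (Δ i) : ℝ) - ∑ j ∈ S i, (inner ℝ (x t i - x t j) (Δ j) : ℝ) := by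
      intro i
      rw [← sum_sub_distrib]
      exact Finset.sum_congr rfl fun j _ => inner_sub_right _ _ _
    rw [Finset.sum_congr rfl fun i _ => h1 i, sum_sub_distrib,
      hswap (fun i j => (inner ℝ (x t i - x t j) (Δ j) : ℝ))]
    have h2 : ∀ i, ∑ j ∈ S i, (inner ℝ (x t j - x t i) (Δ i) : ℝ)
        = -∑ j ∈ S i, (inner ℝ (x t i - x t j) (Δ i) : ℝ) := by
      intro i
      rw [← sum_neg_distrib]
      refine Finset.sum_congr rfl fun j _ => ?_
      rw [← inner_neg_left, neg_sub]
    rw [Finset.sum_congr rfl fun i _ => h2 i, sum_neg_distrib]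
    rw [Finset.sum_congr rfl fun i _ => (sum_inner (S i) (fun j => x t i - x t j) (Δ i)).symm]
    ring
  -- the quadratic term
  have hB : ∑ i, ∑ j ∈ S i, ‖Δ i - Δ j‖ ^ 2 ≤ ∑ i, 4 * c i * ‖Δ i‖ ^ 2 := by
    have hnormsub : ∀ a b : EuclideanSpace ℝ (Fin d),
        ‖a - b‖ ^ 2 ≤ 2 * ‖a‖ ^ 2 + 2 * ‖b‖ ^ 2 := by
      intro a b
      have h := norm_sub_le a b
      nlinarith [norm_nonneg (a - b), norm_nonneg a, norm_nonneg b, sq_nonneg (‖a‖ - ‖b‖)]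
    have h1 : ∑ i, ∑ j ∈ S i, ‖Δ i - Δ j‖ ^ 2
        ≤ ∑ i, ∑ j ∈ S i, (2 * ‖Δ i‖ ^ 2 + 2 * ‖Δ j‖ ^ 2) :=
      Finset.sum_le_sum fun i _ => Finset.sum_le_sum fun j _ => hnormsub _ _
    have h2 : ∑ i, ∑ j ∈ S i, ((2:ℝ) * ‖Δ i‖ ^ 2 + 2 * ‖Δ j‖ ^ 2)
        = ∑ i, ∑ j ∈ S i, (2:ℝ) * ‖Δ i‖ ^ 2 + ∑ i, ∑ j ∈ S i, (2:ℝ) * ‖Δ j‖ ^ 2 := by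
      rw [← Finset.sum_add_distrib]
      exact Finset.sum_congr rfl fun i _ => Finset.sum_add_distrib
    have h3 : ∑ i, ∑ j ∈ S i, (2:ℝ) * ‖Δ j‖ ^ 2 = ∑ i, ∑ j ∈ S i, (2:ℝ) * ‖Δ i‖ ^ 2 :=
      hswap (fun i j => (2:ℝ) * ‖Δ j‖ ^ 2)
    have h4 : ∀ i, ∑ j ∈ S i, (2:ℝ) * ‖Δ i‖ ^ 2 = 2 * c i * ‖Δ i‖ ^ 2 := by
      intro i
      rw [Finset.sum_const, nsmul_eq_mul]
      show ((S i).card : ℝ) * (2 * ‖Δ i‖ ^ 2) = 2 * c i * ‖Δ i‖ ^ 2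
      rw [hcdef]; ring
    calc ∑ i, ∑ j ∈ S i, ‖Δ i - Δ j‖ ^ 2
        ≤ ∑ i, ∑ j ∈ S i, ((2:ℝ) * ‖Δ i‖ ^ 2 + 2 * ‖Δ j‖ ^ 2) := h1
      _ = ∑ i, ∑ j ∈ S i, (2:ℝ) * ‖Δ i‖ ^ 2 + ∑ i, ∑ j ∈ S i, (2:ℝ) * ‖Δ j‖ ^ 2 := h2
      _ = 2 * ∑ i, ∑ j ∈ S i, (2:ℝ) * ‖Δ i‖ ^ 2 := by rw [h3]; ring
      _ = 2 * ∑ i, 2 * c i * ‖Δ i‖ ^ 2 := by rw [Finset.sum_congr rfl fun i _ => h4 i]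
      _ = ∑ i, 4 * c i * ‖Δ i‖ ^ 2 := by rw [Finset.mul_sum]; exact Finset.sum_congr rfl fun i _ => by ring
  -- Step B: the sum over confident neighbors dominates 4 Σ ‖Δ i‖²
  have stepB : 4 * (∑ i, ‖Δ i‖ ^ 2) ≤
      ∑ i, ∑ j ∈ S i, (‖x t i - x t j‖ ^ 2 - ‖y i - y j‖ ^ 2) := by
    have e1 : ∑ i, ∑ j ∈ S i, (‖x t i - x t j‖ ^ 2 - ‖y i - y j‖ ^ 2)
        = -2 * (∑ i, ∑ j ∈ S i, (inner ℝ (x t i - x t j) (Δ i - Δ j) : ℝ))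
          - ∑ i, ∑ j ∈ S i, ‖Δ i - Δ j‖ ^ 2 := by
      rw [Finset.sum_congr rfl fun i _ => Finset.sum_congr rfl fun j _ => hexp i j]
      rw [Finset.sum_congr rfl fun (i : Fin n) _ => (sum_sub_distrib _ _ :
        ∑ j ∈ S i, ((-2) * (inner ℝ (x t i - x t j) (Δ i - Δ j) : ℝ) - ‖Δ i - Δ j‖ ^ 2) = _)]
      rw [sum_sub_distrib]
      congr 1
      rw [Finset.mul_sum]
      exact Finset.sum_congr rfl fun i _ => by rw [Finset.mul_sum]
    rw [e1, hA]
    have h5 : ∑ i, (inner ℝ (∑ j ∈ S i, (x t i - x t j)) (Δ i) : ℝ) ≤ ∑ i, -((c i + 1) * ‖Δ i‖ ^ 2) :=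
      Finset.sum_le_sum fun i _ => hkey i
    have h6 : ∑ i, -((c i + 1) * ‖Δ i‖ ^ 2)
        = -(∑ i, 4 * c i * ‖Δ i‖ ^ 2) / 4 - ∑ i, ‖Δ i‖ ^ 2 := by
      have e : ∑ i, -((c i + 1) * ‖Δ i‖ ^ 2)
          = -∑ i, c i * ‖Δ i‖ ^ 2 - ∑ i, ‖Δ i‖ ^ 2 := by
        rw [← sum_neg_distrib, ← sum_sub_distrib]
        exact Finset.sum_congr rfl fun i _ => by ring
      have e2 : (∑ i, 4 * c i * ‖Δ i‖ ^ 2) = 4 * ∑ i, c i * ‖Δ i‖ ^ 2 := by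
        rw [Finset.mul_sum]
        exact Finset.sum_congr rfl fun i _ => by ring
      rw [e, e2]; ring
    rw [h6] at h5
    linarith [hB]
  have hΔnorm : ∑ i, ‖x t i - x (t + 1) i‖ ^ 2 = ∑ i, ‖Δ i‖ ^ 2 := by
    refine Finset.sum_congr rfl fun i _ => ?_
    show ‖x t i - y i‖ ^ 2 = ‖y i - x t i‖ ^ 2
    rw [norm_sub_rev]
  rw [hΔnorm]
  linarith [stepA, stepB]

/-- **Square-summability and vanishing increments for group interaction
(`n` individuals).** In the finite group-interaction model on a graph `E` over `[n]`,
with `Z_g(0) = Σ_{i,j} ((‖x_i(0) − x_j(0)‖² ∧ ε²) ∨ ε²·1{(i,j) ∉ E})`, one has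
`Σ_{t=0}^∞ Σ_i ‖x_i(t) − x_i(t+1)‖² ≤ Z_g(0)/4`; in particular
`x_i(t) − x_i(t+1) → 0` as `t → ∞` for every `i`. -/
theorem group_interaction_increments_vanish (n d : ℕ) (hn : 1 ≤ n) (hd : 1 ≤ d)
    (ε : ℝ) (hε : 0 < ε)
    (G : SimpleGraph (Fin n))
    (x : ℕ → Fin n → EuclideanSpace ℝ (Fin d)) (α : ℕ → Fin n → ℝ)
    (hα : ∀ t i, α t i ∈ Set.Icc (0 : ℝ) 1)
    (hdyn : ∀ t i, x (t + 1) i =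
      α t i • x t i + ((1 - α t i) / ((grpNbhd G ε x t i).card : ℝ)) •
        ∑ k ∈ grpNbhd G ε x t i, x t k) :
    Summable (fun t : ℕ => ∑ i, ‖x t i - x (t + 1) i‖ ^ 2) ∧
    (∑' t : ℕ, ∑ i, ‖x t i - x (t + 1) i‖ ^ 2) ≤
      (∑ i, ∑ j, (min (‖x 0 i - x 0 j‖ ^ 2) (ε ^ 2)) ⊔
        (if G.Adj i j then 0 else ε ^ 2)) / 4 ∧
    (∀ i, Filter.Tendsto (fun t => x t i - x (t + 1) i) Filter.atTop (nhds 0)) := by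
  set Z : ℕ → ℝ := fun t => ∑ i, ∑ j,
    (min (‖x t i - x t j‖ ^ 2) (ε ^ 2)) ⊔ (if G.Adj i j then 0 else ε ^ 2) with hZ
  set F : ℕ → ℝ := fun t => ∑ i, ‖x t i - x (t + 1) i‖ ^ 2 with hF
  have hstep : ∀ t, 4 * F t + Z (t + 1) ≤ Z t := fun t =>
    group_step ε hε G x α hα hdyn t
  have hZ0 : ∀ t, 0 ≤ Z t := by
    intro t
    refine Finset.sum_nonneg fun i _ => Finset.sum_nonneg fun j _ => ?_
    exact le_trans (le_min (by positivity) (by positivity)) (le_max_left _ _)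
  have hF0 : ∀ t, 0 ≤ F t := fun t => Finset.sum_nonneg fun i _ => by positivity
  have hpartial : ∀ T, ∑ t ∈ Finset.range T, F t ≤ Z 0 / 4 := by
    intro T
    have key : ∀ T, 4 * (∑ t ∈ Finset.range T, F t) + Z T ≤ Z 0 := by
      intro T
      induction T with
      | zero => simp
      | succ T ih =>
        rw [Finset.sum_range_succ]
        have := hstep T
        linarith
    have := key T
    linarith [hZ0 T]
  have hsummable : Summable F := summable_of_sum_range_le hF0 hpartial
  refine ⟨hsummable, Summable.tsum_le_of_sum_range_le hsummable hpartial, ?_⟩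
  intro i
  have hsum_i : Summable (fun t => ‖x t i - x (t + 1) i‖ ^ 2) := by
    refine Summable.of_nonneg_of_le (fun t => by positivity) (fun t => ?_) hsummable
    exact Finset.single_le_sum (f := fun j => ‖x t j - x (t + 1) j‖ ^ 2)
      (fun j _ => by positivity) (Finset.mem_univ i)
  have h0 : Filter.Tendsto (fun t => ‖x t i - x (t + 1) i‖ ^ 2) Filter.atTop (nhds 0) :=
    hsum_i.tendsto_atTop_zero
  rw [tendsto_zero_iff_norm_tendsto_zero]
  have h1 := h0.sqrt
  rw [Real.sqrt_zero] at h1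
  refine h1.congr fun t => ?_
  exact Real.sqrt_sq (norm_nonneg _)
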